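/- For every integer k ≥ 2, ∫_0^1 e^{z/2} z^{−1} (log(1/(1−z)))^{k}/k! dz ≤ ∫_0^1 e^{z/2} z^{−1} (log(1/(1−z)))^{k−1}/(k−1)! dz; that is, the sequence ρ_k := e^{−1} ∫_0^1 e^{z/2} z^{−1} (log(1/(1−z)))^{k−1}/(k−1)! dz is nonincreasing in k for k ≥ 2 (and each such integral is finite). -/

import Mathlib

open MeasureTheory Set

noncomputable section

private lemma aux_L_nonneg {z : ℝ} (h0 : 0 < z) (h1 : z < 1) :
    0 ≤ Real.log (1 / (1 - z)) := by
  apply Real.log_nonneg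
  rw [le_div_iff₀ (by linarith)]
  linarith

private lemma aux_L_le {z : ℝ} (h0 : 0 < z) (h1 : z < 1) :
    Real.log (1 / (1 - z)) ≤ z / (1 - z) := by
  have h1z : (0:ℝ) < 1 - z := by linarith
  have h := Real.log_le_sub_one_of_pos (show (0:ℝ) < 1 / (1 - z) by positivity)
  have h2 : 1 / (1 - z) - 1 = z / (1 - z) := by field_simp; ring
  linarith

private lemma aux_L_le_two {z : ℝ} (h0 : 0 < z) (hz : z ≤ 1 / 2) :
    Real.log (1 / (1 - z)) ≤ 2 * z := by
  have h1 : z < 1 := by linarith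
  have h1z : (0:ℝ) < 1 - z := by linarith
  refine (aux_L_le h0 h1).trans ?_
  rw [div_le_iff₀ h1z]
  nlinarith

private lemma aux_Lpow_le (m : ℕ) (hm : 1 ≤ m) {z : ℝ} (h0 : 0 < z) (h1 : z < 1) :
    (Real.log (1 / (1 - z))) ^ m ≤ (2 * m) ^ m * (1 - z) ^ (-(1/2) : ℝ) := by
  have h1z : (0:ℝ) < 1 - z := by linarith
  have hx : (0:ℝ) < 1 / (1 - z) := by positivity
  set x : ℝ := 1 / (1 - z) with hxdef
  have hm0 : (0:ℝ) < (m : ℝ) := by exact_mod_cast hm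
  have key : Real.log x ≤ 2 * m * x ^ ((1:ℝ) / (2 * m)) := by
    have hrp : (0:ℝ) < x ^ ((1:ℝ) / (2 * m)) := Real.rpow_pos_of_pos hx _
    have h2 : Real.log (x ^ ((1:ℝ) / (2 * m))) ≤ x ^ ((1:ℝ) / (2 * m)) := by
      have := Real.log_le_sub_one_of_pos hrp; linarith
    have h3 : Real.log (x ^ ((1:ℝ) / (2 * m))) = ((1:ℝ) / (2 * m)) * Real.log x :=
      Real.log_rpow hx _
    rw [h3] at h2
    have h2m : (0:ℝ) < 2 * m := by positivity
    calc Real.log x = (2 * m) * (((1:ℝ) / (2 * m)) * Real.log x) := by field_simp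
      _ ≤ (2 * m) * (x ^ ((1:ℝ) / (2 * m))) := by
          apply mul_le_mul_of_nonneg_left h2 h2m.le
  have hLnn : 0 ≤ Real.log x := aux_L_nonneg h0 h1
  have hpow : (Real.log x) ^ m ≤ (2 * m * x ^ ((1:ℝ) / (2 * m))) ^ m :=
    pow_le_pow_left₀ hLnn key m
  have heq : (2 * (m:ℝ) * x ^ ((1:ℝ) / (2 * m))) ^ m
      = (2 * m) ^ m * x ^ ((1/2 : ℝ)) := by
    have hmne : (m:ℝ) ≠ 0 := hm0.ne'
    have hexp2 : (1:ℝ) / (2 * (m:ℝ)) * (m:ℝ) = 1/2 := by field_simp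
    rw [mul_pow, ← Real.rpow_natCast (x ^ ((1:ℝ) / (2 * m))) m, ← Real.rpow_mul hx.le, hexp2]
  have hxr : x ^ ((1/2 : ℝ)) = (1 - z) ^ (-(1/2) : ℝ) := by
    rw [hxdef, one_div, ← Real.rpow_neg_one (1-z), ← Real.rpow_mul h1z.le]
    norm_num
  calc (Real.log x) ^ m ≤ (2 * (m:ℝ) * x ^ ((1:ℝ) / (2 * m))) ^ m := hpow
    _ = (2 * m) ^ m * x ^ ((1/2 : ℝ)) := heq
    _ = (2 * m) ^ m * (1 - z) ^ (-(1/2) : ℝ) := by rw [hxr]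

private lemma aux_F_le (m : ℕ) (hm : 1 ≤ m) {z : ℝ} (h0 : 0 < z) (h1 : z < 1) :
    (1 - z) * (Real.log (1 / (1 - z))) ^ m ≤ (2 * m) ^ m * (1 - z) ^ ((1/2) : ℝ) := by
  have h1z : (0:ℝ) < 1 - z := by linarith
  have h := aux_Lpow_le m hm h0 h1
  have h2 : (1 - z) * ((2 * (m:ℝ)) ^ m * (1 - z) ^ (-(1/2) : ℝ))
      = (2 * m) ^ m * (1 - z) ^ ((1/2) : ℝ) := by
    rw [mul_comm (1 - z), mul_assoc]
    congr 1
    nth_rewrite 2 [← Real.rpow_one (1 - z)]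
    rw [← Real.rpow_add h1z]
    norm_num
  calc (1 - z) * (Real.log (1 / (1 - z))) ^ m
      ≤ (1 - z) * ((2 * (m:ℝ)) ^ m * (1 - z) ^ (-(1/2) : ℝ)) := by
        apply mul_le_mul_of_nonneg_left h h1z.le
    _ = (2 * m) ^ m * (1 - z) ^ ((1/2) : ℝ) := h2

private lemma aux_int_rpow :
    IntegrableOn (fun z : ℝ => (1 - z) ^ (-(1/2) : ℝ)) (Ioo (0:ℝ) 1) volume := by
  have h : IntervalIntegrable (fun x : ℝ => x ^ (-(1/2) : ℝ)) volume 0 1 :=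
    intervalIntegral.intervalIntegrable_rpow' (by norm_num)
  have h2 := (h.comp_sub_left 1)
  simp only [sub_zero, sub_self] at h2
  have h3 := h2.symm
  rw [intervalIntegrable_iff_integrableOn_Ioc_of_le (by norm_num : (0:ℝ) ≤ 1)] at h3
  exact h3.mono_set Ioo_subset_Ioc_self

private lemma aux_meas (m : ℕ) :
    AEStronglyMeasurable (fun z : ℝ => Real.exp (z / 2) * z⁻¹ * (Real.log (1 / (1 - z))) ^ m)
      (volume.restrict (Ioo (0:ℝ) 1)) := by
  apply Measurable.aestronglyMeasurable
  exact ((Real.measurable_exp.comp (measurable_id.div_const 2)).mul measurable_inv).mul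
    ((Real.measurable_log.comp (measurable_const.div (measurable_const.sub measurable_id))).pow_const m)

private lemma aux_integrable (m : ℕ) (hm : 1 ≤ m) :
    IntegrableOn (fun z : ℝ => Real.exp (z / 2) * z⁻¹ * (Real.log (1 / (1 - z))) ^ m)
      (Ioo (0:ℝ) 1) volume := by
  set C : ℝ := Real.exp 1 * (2 ^ m + 2 * (2 * m) ^ m) with hC
  apply Integrable.mono' (aux_int_rpow.const_mul C) (aux_meas m)
  rw [ae_restrict_iff' measurableSet_Ioo]
  apply ae_of_all
  rintro z ⟨h0, h1⟩
  have h1z : (0:ℝ) < 1 - z := by linarith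
  have hLnn : 0 ≤ Real.log (1 / (1 - z)) := aux_L_nonneg h0 h1
  have hfnn : 0 ≤ Real.exp (z / 2) * z⁻¹ * (Real.log (1 / (1 - z))) ^ m := by positivity
  rw [Real.norm_eq_abs, abs_of_nonneg hfnn]
  have he : Real.exp (z / 2) ≤ Real.exp 1 := Real.exp_le_exp.2 (by linarith)
  have hrnn : (0:ℝ) ≤ (1 - z) ^ (-(1/2) : ℝ) := Real.rpow_nonneg h1z.le _
  have hr1 : (1:ℝ) ≤ (1 - z) ^ (-(1/2) : ℝ) := by
    have := Real.rpow_le_rpow_of_exponent_ge h1z (by linarith) (show -(1/2 : ℝ) ≤ 0 by norm_num)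
    simpa using this
  rcases le_or_gt z (1/2) with hz | hz
  · -- z ≤ 1/2
    have hL2 : Real.log (1 / (1 - z)) ≤ 2 * z := aux_L_le_two h0 hz
    have hLm : (Real.log (1 / (1 - z))) ^ m ≤ (2 * z) ^ m := pow_le_pow_left₀ hLnn hL2 m
    have hbound : Real.exp (z / 2) * z⁻¹ * (Real.log (1 / (1 - z))) ^ m
        ≤ Real.exp 1 * 2 ^ m := by
      have h3 : z⁻¹ * (2 * z) ^ m = 2 ^ m * z ^ (m - 1) := by
        rw [mul_pow]
        have : z ^ m = z * z ^ (m - 1) := by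
          rw [← pow_succ']
          congr 1
          omega
        rw [this]
        field_simp
      have h4 : z ^ (m - 1) ≤ 1 := pow_le_one₀ h0.le h1.le
      calc Real.exp (z / 2) * z⁻¹ * (Real.log (1 / (1 - z))) ^ m
          ≤ Real.exp 1 * (z⁻¹ * (2 * z) ^ m) := by
            rw [mul_assoc]
            apply mul_le_mul he ?_ (by positivity) (Real.exp_pos 1).le
            exact mul_le_mul_of_nonneg_left hLm (by positivity)
        _ = Real.exp 1 * (2 ^ m * z ^ (m - 1)) := by rw [h3]
        _ ≤ Real.exp 1 * (2 ^ m * 1) := by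
            apply mul_le_mul_of_nonneg_left ?_ (Real.exp_pos 1).le
            exact mul_le_mul_of_nonneg_left h4 (by positivity)
        _ = Real.exp 1 * 2 ^ m := by ring
    calc Real.exp (z / 2) * z⁻¹ * (Real.log (1 / (1 - z))) ^ m
        ≤ Real.exp 1 * 2 ^ m := hbound
      _ = (Real.exp 1 * 2 ^ m) * 1 := by ring
      _ ≤ C * (1 - z) ^ (-(1/2) : ℝ) := by
          apply mul_le_mul ?_ hr1 zero_le_one ?_
          · rw [hC]
            nlinarith [Real.exp_pos 1, pow_nonneg (by positivity : (0:ℝ) ≤ 2 * (m:ℝ)) m,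
                pow_pos (show (0:ℝ) < 2 by norm_num) m]
          · rw [hC]
            positivity
  · -- 1/2 < z
    have hzi : z⁻¹ ≤ 2 := by
      rw [inv_eq_one_div, div_le_iff₀ h0]; linarith
    have hLm := aux_Lpow_le m hm h0 h1
    calc Real.exp (z / 2) * z⁻¹ * (Real.log (1 / (1 - z))) ^ m
        ≤ (Real.exp 1 * 2) * ((2 * m) ^ m * (1 - z) ^ (-(1/2) : ℝ)) := by
          apply mul_le_mul ?_ hLm (by positivity) (by positivity)
          exact mul_le_mul he hzi (by positivity) (Real.exp_pos 1).le
      _ = (Real.exp 1 * (2 * (2 * m) ^ m)) * (1 - z) ^ (-(1/2) : ℝ) := by ring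
      _ ≤ C * (1 - z) ^ (-(1/2) : ℝ) := by
          apply mul_le_mul_of_nonneg_right ?_ hrnn
          rw [hC]
          nlinarith [Real.exp_pos 1, pow_pos (show (0:ℝ) < 2 by norm_num) m]

private lemma aux_integrable_T1 (p : ℕ) (hp : 1 ≤ p) :
    IntegrableOn (fun z : ℝ => Real.exp (z / 2) * (z⁻¹ / 2 - (z ^ 2)⁻¹) *
      ((1 - z) * (Real.log (1 / (1 - z))) ^ (p + 1))) (Ioo (0:ℝ) 1) volume := by
  set C : ℝ := Real.exp 1 * (2 ^ (p + 1) + 4 * (2 * (p + 1)) ^ (p + 1)) with hC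
  have hconst : IntegrableOn (fun _ : ℝ => C) (Ioo (0:ℝ) 1) volume :=
    integrableOn_const measure_Ioo_lt_top.ne
  apply Integrable.mono' hconst
  · apply Measurable.aestronglyMeasurable
    exact ((Real.measurable_exp.comp (measurable_id.div_const 2)).mul
        ((measurable_inv.div_const 2).sub ((measurable_id.pow_const 2).inv))).mul
      ((measurable_const.sub measurable_id).mul
        ((Real.measurable_log.comp (measurable_const.div (measurable_const.sub measurable_id))).pow_const (p+1)))
  rw [ae_restrict_iff' measurableSet_Ioo]
  apply ae_of_all
  rintro z ⟨h0, h1⟩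
  have h1z : (0:ℝ) < 1 - z := by linarith
  have hLnn : 0 ≤ Real.log (1 / (1 - z)) := aux_L_nonneg h0 h1
  have he : Real.exp (z / 2) ≤ Real.exp 1 := Real.exp_le_exp.2 (by linarith)
  have hzinv : z⁻¹ ≤ (z ^ 2)⁻¹ := by
    apply inv_anti₀ (by positivity)
    nlinarith
  have habs : |z⁻¹ / 2 - (z ^ 2)⁻¹| ≤ (z ^ 2)⁻¹ := by
    have hzn : (0:ℝ) ≤ z⁻¹ := by positivity
    have hnn : (0:ℝ) ≤ (z ^ 2)⁻¹ - z⁻¹ / 2 := by linarith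
    rw [abs_sub_comm, abs_of_nonneg hnn]
    linarith
  have hFnn : 0 ≤ (1 - z) * (Real.log (1 / (1 - z))) ^ (p + 1) := by positivity
  rw [Real.norm_eq_abs, abs_mul, abs_mul, abs_of_nonneg (Real.exp_pos _).le,
    abs_of_nonneg hFnn]
  rcases le_or_gt z (1/2) with hz | hz
  · -- z ≤ 1/2 : bound by e * 2^(p+1)
    have hL2 : Real.log (1 / (1 - z)) ≤ 2 * z := aux_L_le_two h0 hz
    have hLm : (Real.log (1 / (1 - z))) ^ (p + 1) ≤ (2 * z) ^ (p + 1) :=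
      pow_le_pow_left₀ hLnn hL2 _
    have key : (z ^ 2)⁻¹ * ((1 - z) * (Real.log (1 / (1 - z))) ^ (p + 1))
        ≤ 2 ^ (p + 1) := by
      have h3 : (z ^ 2)⁻¹ * (2 * z) ^ (p + 1) = 2 ^ (p + 1) * z ^ (p - 1) := by
        rw [mul_pow]
        have : z ^ (p + 1) = z ^ 2 * z ^ (p - 1) := by
          rw [← pow_add]
          congr 1
          omega
        rw [this]
        field_simp
      have h4 : z ^ (p - 1) ≤ 1 := pow_le_one₀ h0.le h1.le
      calc (z ^ 2)⁻¹ * ((1 - z) * (Real.log (1 / (1 - z))) ^ (p + 1))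
          ≤ (z ^ 2)⁻¹ * (1 * (2 * z) ^ (p + 1)) := by
            apply mul_le_mul_of_nonneg_left ?_ (by positivity)
            apply mul_le_mul (by linarith) hLm (by positivity) zero_le_one
        _ = 2 ^ (p + 1) * z ^ (p - 1) := by rw [one_mul, h3]
        _ ≤ 2 ^ (p + 1) * 1 := by
            apply mul_le_mul_of_nonneg_left h4 (by positivity)
        _ = 2 ^ (p + 1) := by ring
    calc Real.exp (z / 2) * |z⁻¹ / 2 - (z ^ 2)⁻¹| *
          ((1 - z) * (Real.log (1 / (1 - z))) ^ (p + 1))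
        ≤ Real.exp 1 * ((z ^ 2)⁻¹ * ((1 - z) * (Real.log (1 / (1 - z))) ^ (p + 1))) := by
          rw [mul_assoc]
          apply mul_le_mul he ?_ (by positivity) (Real.exp_pos 1).le
          exact mul_le_mul_of_nonneg_right habs hFnn
      _ ≤ Real.exp 1 * 2 ^ (p + 1) := mul_le_mul_of_nonneg_left key (Real.exp_pos 1).le
      _ ≤ C := by
          rw [hC]
          nlinarith [Real.exp_pos 1,
            pow_pos (by positivity : (0:ℝ) < 2 * ((p:ℝ) + 1)) (p + 1)]
  · -- 1/2 < z : bound by 4 e (2(p+1))^(p+1)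
    have hz2 : (z ^ 2)⁻¹ ≤ 4 := by
      rw [inv_le_iff_one_le_mul₀ (by positivity)]
      nlinarith
    have hF := aux_F_le (p + 1) (by omega) h0 h1
    have hr1 : (1 - z) ^ ((1/2) : ℝ) ≤ 1 :=
      Real.rpow_le_one h1z.le (by linarith) (by norm_num)
    have key : (1 - z) * (Real.log (1 / (1 - z))) ^ (p + 1)
        ≤ (2 * ((p:ℝ) + 1)) ^ (p + 1) := by
      calc (1 - z) * (Real.log (1 / (1 - z))) ^ (p + 1)
          ≤ (2 * ((p:ℕ) + 1 : ℕ) : ℝ) ^ (p + 1) * (1 - z) ^ ((1/2) : ℝ) := by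
            exact_mod_cast hF
        _ ≤ (2 * ((p:ℝ) + 1)) ^ (p + 1) * 1 := by
            push_cast
            apply mul_le_mul_of_nonneg_left hr1 (by positivity)
        _ = (2 * ((p:ℝ) + 1)) ^ (p + 1) := by ring
    calc Real.exp (z / 2) * |z⁻¹ / 2 - (z ^ 2)⁻¹| *
          ((1 - z) * (Real.log (1 / (1 - z))) ^ (p + 1))
        ≤ (Real.exp 1 * 4) * (2 * ((p:ℝ) + 1)) ^ (p + 1) := by
          apply mul_le_mul ?_ key hFnn (by positivity)
          exact mul_le_mul he (habs.trans hz2) (abs_nonneg _) (Real.exp_pos 1).le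
      _ ≤ C := by
          rw [hC]
          nlinarith [Real.exp_pos 1, pow_pos (show (0:ℝ) < 2 by norm_num) (p + 1)]

private lemma aux_hasDeriv (p : ℕ) {x : ℝ} (h0 : 0 < x) (h1 : x < 1) :
    HasDerivAt (fun z : ℝ => Real.exp (z / 2) * z⁻¹ *
        ((1 - z) * (Real.log (1 / (1 - z))) ^ (p + 1)))
      (Real.exp (x / 2) * (x⁻¹ / 2 - (x ^ 2)⁻¹) *
          ((1 - x) * (Real.log (1 / (1 - x))) ^ (p + 1)) +
        Real.exp (x / 2) * x⁻¹ *
          (((p:ℝ) + 1) * (Real.log (1 / (1 - x))) ^ p - (Real.log (1 / (1 - x))) ^ (p + 1))) x := by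
  have h1x : (1:ℝ) - x ≠ 0 := by intro h; linarith [h]
  simp only [one_div, Real.log_inv]
  have hlog : HasDerivAt (fun z : ℝ => Real.log (1 - z)) ((1 - x)⁻¹ * (-1)) x :=
    (Real.hasDerivAt_log h1x).comp x ((hasDerivAt_id x).const_sub 1)
  have hL : HasDerivAt (fun z : ℝ => -Real.log (1 - z)) ((1 - x)⁻¹) x := by
    have := hlog.neg
    simpa [Pi.neg_def] using this
  have hLk := hL.pow (p + 1)
  have hF := ((hasDerivAt_id x).const_sub 1).mul hLk
  have hexp : HasDerivAt (fun z : ℝ => Real.exp (z / 2)) (Real.exp (x / 2) * (1 / 2)) x := by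
    have h := ((hasDerivAt_id x).div_const 2).exp
    simpa using h
  have hG := hexp.mul (hasDerivAt_inv h0.ne')
  have hH := hG.mul hF
  convert hH using 1
  · rfl
  · rfl
  · funext z; simp only [Pi.mul_apply, Pi.pow_apply, id]
  have hx : x ≠ 0 := h0.ne'
  simp only [Pi.mul_apply, Pi.pow_apply, id, Nat.add_sub_cancel, Nat.cast_add, Nat.cast_one]
  field_simp
  ring

private lemma aux_tend0 (p : ℕ) (hp : 1 ≤ p) :
    Filter.Tendsto (fun z : ℝ => Real.exp (z / 2) * z⁻¹ *
      ((1 - z) * (Real.log (1 / (1 - z))) ^ (p + 1))) (nhdsWithin 0 (Ioi 0)) (nhds 0) := by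
  apply squeeze_zero' (g := fun z : ℝ => Real.exp 1 * 2 ^ (p + 1) * z ^ p)
  · filter_upwards [Ioo_mem_nhdsGT_of_mem (by norm_num : (0:ℝ) ∈ Ico (0:ℝ) (1/2))]
    rintro z ⟨h0, hz⟩
    have h1 : z < 1 := by linarith
    have := aux_L_nonneg h0 h1
    have h1z : (0:ℝ) < 1 - z := by linarith
    positivity
  · filter_upwards [Ioo_mem_nhdsGT_of_mem (by norm_num : (0:ℝ) ∈ Ico (0:ℝ) (1/2))]
    rintro z ⟨h0, hz⟩
    have h1 : z < 1 := by linarith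
    have h1z : (0:ℝ) < 1 - z := by linarith
    have hLnn := aux_L_nonneg h0 h1
    have hL2 : Real.log (1 / (1 - z)) ≤ 2 * z := aux_L_le_two h0 hz.le
    have hLm : (Real.log (1 / (1 - z))) ^ (p + 1) ≤ (2 * z) ^ (p + 1) :=
      pow_le_pow_left₀ hLnn hL2 _
    have he : Real.exp (z / 2) ≤ Real.exp 1 := Real.exp_le_exp.2 (by linarith)
    have h3 : z⁻¹ * (2 * z) ^ (p + 1) = 2 ^ (p + 1) * z ^ p := by
      rw [mul_pow, pow_succ]
      field_simp
      ring
    calc Real.exp (z / 2) * z⁻¹ * ((1 - z) * (Real.log (1 / (1 - z))) ^ (p + 1))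
        ≤ Real.exp 1 * (z⁻¹ * (1 * (2 * z) ^ (p + 1))) := by
          rw [mul_assoc]
          apply mul_le_mul he ?_ (by positivity) (Real.exp_pos 1).le
          apply mul_le_mul_of_nonneg_left ?_ (by positivity)
          apply mul_le_mul (by linarith) hLm (by positivity) zero_le_one
      _ = Real.exp 1 * 2 ^ (p + 1) * z ^ p := by rw [one_mul, h3]; ring
  · have h := ((continuous_pow p).tendsto (0:ℝ)).const_mul (Real.exp 1 * 2 ^ (p + 1))
    rw [zero_pow (by omega : p ≠ 0), mul_zero] at h
    exact h.mono_left nhdsWithin_le_nhds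

private lemma aux_tend1 (p : ℕ) :
    Filter.Tendsto (fun z : ℝ => Real.exp (z / 2) * z⁻¹ *
      ((1 - z) * (Real.log (1 / (1 - z))) ^ (p + 1))) (nhdsWithin 1 (Iio 1)) (nhds 0) := by
  set c : ℝ := Real.exp 1 * 2 * (2 * ((p:ℝ) + 1)) ^ (p + 1) with hc
  apply squeeze_zero' (g := fun z : ℝ => c * (1 - z) ^ ((1/2) : ℝ))
  · filter_upwards [Ioo_mem_nhdsLT_of_mem (by norm_num : (1:ℝ) ∈ Ioc (1/2 : ℝ) 1)]
    rintro z ⟨hz, h1⟩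
    have h0 : (0:ℝ) < z := by linarith
    have h1z : (0:ℝ) < 1 - z := by linarith
    have := aux_L_nonneg h0 h1
    positivity
  · filter_upwards [Ioo_mem_nhdsLT_of_mem (by norm_num : (1:ℝ) ∈ Ioc (1/2 : ℝ) 1)]
    rintro z ⟨hz, h1⟩
    have h0 : (0:ℝ) < z := by linarith
    have h1z : (0:ℝ) < 1 - z := by linarith
    have hLnn := aux_L_nonneg h0 h1
    have he : Real.exp (z / 2) ≤ Real.exp 1 := Real.exp_le_exp.2 (by linarith)
    have hzi : z⁻¹ ≤ 2 := by rw [inv_eq_one_div, div_le_iff₀ h0]; linarith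
    have hF := aux_F_le (p + 1) (by omega) h0 h1
    have hF' : (1 - z) * (Real.log (1 / (1 - z))) ^ (p + 1)
        ≤ (2 * ((p:ℝ) + 1)) ^ (p + 1) * (1 - z) ^ ((1/2) : ℝ) := by exact_mod_cast hF
    calc Real.exp (z / 2) * z⁻¹ * ((1 - z) * (Real.log (1 / (1 - z))) ^ (p + 1))
        ≤ (Real.exp 1 * 2) * ((2 * ((p:ℝ) + 1)) ^ (p + 1) * (1 - z) ^ ((1/2) : ℝ)) := by
          apply mul_le_mul ?_ hF' (by positivity) (by positivity)
          exact mul_le_mul he hzi (by positivity) (Real.exp_pos 1).le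
      _ = c * (1 - z) ^ ((1/2) : ℝ) := by rw [hc]; ring
  · have h1 : Filter.Tendsto (fun z : ℝ => 1 - z) (nhdsWithin 1 (Iio 1)) (nhds 0) := by
      have h : Filter.Tendsto (fun z : ℝ => 1 - z) (nhds 1) (nhds (1 - 1)) :=
        Filter.Tendsto.sub tendsto_const_nhds Filter.tendsto_id
      rw [sub_self] at h
      exact h.mono_left nhdsWithin_le_nhds
    have h2 : Filter.Tendsto (fun z : ℝ => (1 - z) ^ ((1/2) : ℝ))
        (nhdsWithin 1 (Iio 1)) (nhds 0) := by
      have hc2 := (Real.continuousAt_rpow_const 0 (1/2) (Or.inr (by norm_num))).tendsto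
      have := hc2.comp h1
      simpa [Function.comp_def, Real.zero_rpow (by norm_num : (1/2 : ℝ) ≠ 0)] using this
    have := h2.const_mul c
    simpa using this

theorem rho_integrals_antitone (k : ℕ) (hk : 2 ≤ k) :
    IntegrableOn
      (fun z : ℝ =>
        Real.exp (z / 2) * z⁻¹ * (Real.log (1 / (1 - z))) ^ (k - 1) /
          (Nat.factorial (k - 1))) (Ioo (0:ℝ) 1) volume ∧
    IntegrableOn
      (fun z : ℝ =>
        Real.exp (z / 2) * z⁻¹ * (Real.log (1 / (1 - z))) ^ k /
          (Nat.factorial k)) (Ioo (0:ℝ) 1) volume ∧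
    (∫ z in Ioo (0:ℝ) 1,
        Real.exp (z / 2) * z⁻¹ * (Real.log (1 / (1 - z))) ^ k / (Nat.factorial k)) ≤
      ∫ z in Ioo (0:ℝ) 1,
        Real.exp (z / 2) * z⁻¹ * (Real.log (1 / (1 - z))) ^ (k - 1) /
          (Nat.factorial (k - 1)) := by
  obtain ⟨n, rfl⟩ : ∃ n, k = n + 2 := ⟨k - 2, by omega⟩
  have hsub : n + 2 - 1 = n + 1 := rfl
  rw [hsub]
  set p : ℕ := n + 1 with hp
  have hp1 : 1 ≤ p := by omega
  have hT2 : IntegrableOn (fun z : ℝ =>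
      Real.exp (z / 2) * z⁻¹ * (Real.log (1 / (1 - z))) ^ p) (Ioo (0:ℝ) 1) volume :=
    aux_integrable p hp1
  have hT3 : IntegrableOn (fun z : ℝ =>
      Real.exp (z / 2) * z⁻¹ * (Real.log (1 / (1 - z))) ^ (p + 1)) (Ioo (0:ℝ) 1) volume :=
    aux_integrable (p + 1) (by omega)
  have hT1 : IntegrableOn (fun z : ℝ => Real.exp (z / 2) * (z⁻¹ / 2 - (z ^ 2)⁻¹) *
      ((1 - z) * (Real.log (1 / (1 - z))) ^ (p + 1))) (Ioo (0:ℝ) 1) volume :=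
    aux_integrable_T1 p hp1
  have hpk : n + 2 = p + 1 := rfl
  refine ⟨hT2.div_const _, by rw [hpk]; exact hT3.div_const _, ?_⟩
  -- the FTC step
  set W : ℝ → ℝ := fun x => Real.exp (x / 2) * (x⁻¹ / 2 - (x ^ 2)⁻¹) *
      ((1 - x) * (Real.log (1 / (1 - x))) ^ (p + 1)) +
    Real.exp (x / 2) * x⁻¹ *
      (((p:ℝ) + 1) * (Real.log (1 / (1 - x))) ^ p - (Real.log (1 / (1 - x))) ^ (p + 1)) with hW
  have hWint : IntegrableOn W (Ioo (0:ℝ) 1) volume := by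
    have h := hT1.add ((hT2.const_mul ((p:ℝ) + 1)).sub hT3)
    have : W = fun z => (Real.exp (z / 2) * (z⁻¹ / 2 - (z ^ 2)⁻¹) *
        ((1 - z) * (Real.log (1 / (1 - z))) ^ (p + 1))) +
        (((p:ℝ) + 1) * (Real.exp (z / 2) * z⁻¹ * (Real.log (1 / (1 - z))) ^ p) -
          Real.exp (z / 2) * z⁻¹ * (Real.log (1 / (1 - z))) ^ (p + 1)) := by
      funext z; rw [hW]; ring
    rw [this]
    exact h
  have hWiv : IntervalIntegrable W volume 0 1 := by
    rw [intervalIntegrable_iff_integrableOn_Ioc_of_le (by norm_num : (0:ℝ) ≤ 1)]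
    exact (integrableOn_Ioc_iff_integrableOn_Ioo enorm_ne_top).2 hWint
  have hderiv : ∀ x ∈ Ioo (0:ℝ) 1, HasDerivAt (fun z : ℝ => Real.exp (z / 2) * z⁻¹ *
      ((1 - z) * (Real.log (1 / (1 - z))) ^ (p + 1))) (W x) x := by
    rintro x ⟨h0, h1⟩
    exact aux_hasDeriv p h0 h1
  have hFTC := intervalIntegral.integral_eq_sub_of_hasDerivAt_of_tendsto
    (by norm_num : (0:ℝ) < 1) hderiv hWiv (aux_tend0 p hp1) (aux_tend1 p)
  rw [intervalIntegral.integral_of_le (by norm_num : (0:ℝ) ≤ 1),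
    integral_Ioc_eq_integral_Ioo, sub_zero] at hFTC
  -- split the integral of W
  have hsplit : (∫ z in Ioo (0:ℝ) 1, W z) =
      (∫ z in Ioo (0:ℝ) 1, Real.exp (z / 2) * (z⁻¹ / 2 - (z ^ 2)⁻¹) *
        ((1 - z) * (Real.log (1 / (1 - z))) ^ (p + 1))) +
      (((p:ℝ) + 1) * (∫ z in Ioo (0:ℝ) 1, Real.exp (z / 2) * z⁻¹ *
          (Real.log (1 / (1 - z))) ^ p) -
        ∫ z in Ioo (0:ℝ) 1, Real.exp (z / 2) * z⁻¹ * (Real.log (1 / (1 - z))) ^ (p + 1)) := by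
    calc (∫ z in Ioo (0:ℝ) 1, W z)
        = ∫ z in Ioo (0:ℝ) 1, (Real.exp (z / 2) * (z⁻¹ / 2 - (z ^ 2)⁻¹) *
            ((1 - z) * (Real.log (1 / (1 - z))) ^ (p + 1)) +
          (((p:ℝ) + 1) * (Real.exp (z / 2) * z⁻¹ * (Real.log (1 / (1 - z))) ^ p) -
            Real.exp (z / 2) * z⁻¹ * (Real.log (1 / (1 - z))) ^ (p + 1))) := by
          apply setIntegral_congr_fun measurableSet_Ioo
          intro z _
          rw [hW]
          ring
      _ = (∫ z in Ioo (0:ℝ) 1, Real.exp (z / 2) * (z⁻¹ / 2 - (z ^ 2)⁻¹) *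
            ((1 - z) * (Real.log (1 / (1 - z))) ^ (p + 1))) +
          ∫ z in Ioo (0:ℝ) 1, (((p:ℝ) + 1) * (Real.exp (z / 2) * z⁻¹ *
              (Real.log (1 / (1 - z))) ^ p) -
            Real.exp (z / 2) * z⁻¹ * (Real.log (1 / (1 - z))) ^ (p + 1)) :=
          integral_add hT1 ((hT2.const_mul _).sub hT3)
      _ = _ := by
          rw [integral_sub (hT2.const_mul _) hT3, MeasureTheory.integral_const_mul]
  have hJ : (∫ z in Ioo (0:ℝ) 1, Real.exp (z / 2) * (z⁻¹ / 2 - (z ^ 2)⁻¹) *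
      ((1 - z) * (Real.log (1 / (1 - z))) ^ (p + 1))) ≤ 0 := by
    apply setIntegral_nonpos measurableSet_Ioo
    rintro z ⟨h0, h1⟩
    have h1z : (0:ℝ) < 1 - z := by linarith
    have hLnn := aux_L_nonneg h0 h1
    have hzinv : z⁻¹ ≤ (z ^ 2)⁻¹ := by
      apply inv_anti₀ (by positivity)
      nlinarith
    have hneg : z⁻¹ / 2 - (z ^ 2)⁻¹ ≤ 0 := by
      have : (0:ℝ) ≤ z⁻¹ := by positivity
      linarith
    apply mul_nonpos_of_nonpos_of_nonneg
    · exact mul_nonpos_of_nonneg_of_nonpos (Real.exp_pos _).le hneg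
    · positivity
  -- conclude
  have hkey : (∫ z in Ioo (0:ℝ) 1, Real.exp (z / 2) * z⁻¹ *
        (Real.log (1 / (1 - z))) ^ (p + 1)) ≤
      ((p:ℝ) + 1) * ∫ z in Ioo (0:ℝ) 1, Real.exp (z / 2) * z⁻¹ *
        (Real.log (1 / (1 - z))) ^ p := by
    rw [hsplit] at hFTC
    linarith
  rw [hpk]
  rw [MeasureTheory.integral_div, MeasureTheory.integral_div]
  rw [div_le_div_iff₀ (by positivity) (by positivity)]
  have hfact : ((p + 1).factorial : ℝ) = ((p:ℝ) + 1) * (p.factorial : ℝ) := by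
    rw [Nat.factorial_succ]
    push_cast
    ring
  rw [hfact]
  calc (∫ z in Ioo (0:ℝ) 1, Real.exp (z / 2) * z⁻¹ * (Real.log (1 / (1 - z))) ^ (p + 1)) *
        (p.factorial : ℝ)
      ≤ (((p:ℝ) + 1) * ∫ z in Ioo (0:ℝ) 1, Real.exp (z / 2) * z⁻¹ *
          (Real.log (1 / (1 - z))) ^ p) * (p.factorial : ℝ) := by
        apply mul_le_mul_of_nonneg_right hkey (by positivity)
    _ = (∫ z in Ioo (0:ℝ) 1, Real.exp (z / 2) * z⁻¹ * (Real.log (1 / (1 - z))) ^ p) *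
        (((p:ℝ) + 1) * (p.factorial : ℝ)) := by ring
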